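/- Let a ≥ b ≥ 1 be integers such that the pair (a,b) is James, and let u and v be non-null universal p-ary designs for (a,b) with coefficient sequences (μ_0,…,μ_{b−1}) and (μ'_0,…,μ'_{b−1}) respectively. Then u and v are similar: there exists α ∈ k with μ_j = α·μ'_j for all 0 ≤ j < b. -/

import Mathlib

open Finset

section NT

variable {p : ℕ} [Fact p.Prime]

lemma lucas_step (n k : ℕ) :
    (n.choose k : ZMod p) = ((n % p).choose (k % p) : ℕ) * ((n / p).choose (k / p) : ℕ) := by
  have h := (Choose.choose_modEq_choose_mod_mul_choose_div_nat (n := n) (k := k) (p := p))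
  exact_mod_cast (ZMod.natCast_eq_natCast_iff _ _ _).mpr h

lemma lucas_pow (L n k : ℕ) :
    (n.choose k : ZMod p) =
      ((n / p ^ L).choose (k / p ^ L) : ℕ) * ((n % p ^ L).choose (k % p ^ L) : ℕ) := by
  induction L generalizing n k with
  | zero => simp [Nat.mod_one]
  | succ L ih =>
    have h1 : n % p ^ (L + 1) % p = n % p := Nat.mod_mod_of_dvd n (dvd_pow_self p (Nat.succ_ne_zero L))
    have h2 : k % p ^ (L + 1) % p = k % p := Nat.mod_mod_of_dvd k (dvd_pow_self p (Nat.succ_ne_zero L))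
    have h3 : n % p ^ (L + 1) / p = n / p % p ^ L := by
      rw [_root_.pow_succ', Nat.mod_mul_right_div_self]
    have h4 : k % p ^ (L + 1) / p = k / p % p ^ L := by
      rw [_root_.pow_succ', Nat.mod_mul_right_div_self]
    have h5 : n / p / p ^ L = n / p ^ (L + 1) := by
      rw [Nat.div_div_eq_div_mul, ← _root_.pow_succ']
    have h6 : k / p / p ^ L = k / p ^ (L + 1) := by
      rw [Nat.div_div_eq_div_mul, ← _root_.pow_succ']
    rw [lucas_step n k, ih (n / p) (k / p), h5, h6,
      lucas_step (n % p ^ (L + 1)) (k % p ^ (L + 1)), h1, h2, h3, h4]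
    ring

lemma choose_p_sub_one (j : ℕ) (hj : j < p) :
    (((p - 1).choose j : ℕ) : ZMod p) = (-1) ^ j := by
  induction j with
  | zero => simp
  | succ j ih =>
    have hp1 : 1 ≤ p := (Fact.out : p.Prime).one_lt.le
    have hpas : (p - 1 + 1).choose (j + 1) = (p - 1).choose j + (p - 1).choose (j + 1) :=
      Nat.choose_succ_succ _ _
    have hsub : p - 1 + 1 = p := by omega
    have hdvd : (p : ℕ) ∣ p.choose (j + 1) :=
      (Fact.out : p.Prime).dvd_choose_self (Nat.succ_ne_zero j) hj
    have hzero : ((p.choose (j + 1) : ℕ) : ZMod p) = 0 :=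
      (ZMod.natCast_eq_zero_iff _ _).mpr hdvd
    rw [hsub] at hpas
    have := congrArg (fun m : ℕ => (m : ZMod p)) hpas
    simp only [Nat.cast_add] at this
    rw [hzero] at this
    have h' : (((p - 1).choose (j + 1) : ℕ) : ZMod p) = -(((p - 1).choose j : ℕ) : ZMod p) :=
      eq_neg_of_add_eq_zero_right this.symm
    rw [h', ih (by omega)]
    ring

lemma choose_pow_sub_one_ne_zero (L s : ℕ) (hs : s < p ^ L) :
    (((p ^ L - 1).choose s : ℕ) : ZMod p) ≠ 0 := by
  induction L generalizing s with
  | zero =>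
    have hs0 : s = 0 := by simpa [Nat.lt_one_iff] using hs
    subst hs0; simp
  | succ L ih =>
    have hp1 : 1 < p := (Fact.out : p.Prime).one_lt
    have hA : 1 ≤ p ^ L := Nat.one_le_pow _ _ (by omega)
    have hdecomp : p ^ (L + 1) - 1 = p * (p ^ L - 1) + (p - 1) := by
      have h : p ^ (L + 1) = p * p ^ L := _root_.pow_succ' p L
      have h2 : p * (p ^ L - 1) = p * p ^ L - p := by
        rw [Nat.mul_sub, Nat.mul_one]
      have h3 : p ≤ p * p ^ L := Nat.le_mul_of_pos_right p (by omega)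
      omega
    have hmod : (p ^ (L + 1) - 1) % p = p - 1 := by
      rw [hdecomp, Nat.mul_add_mod]
      exact Nat.mod_eq_of_lt (by omega)
    have hdiv : (p ^ (L + 1) - 1) / p = p ^ L - 1 := by
      rw [hdecomp, Nat.mul_add_div (by omega)]
      rw [Nat.div_eq_of_lt (by omega)]
      omega
    rw [lucas_step (p := p) (p ^ (L + 1) - 1) s, hmod, hdiv]
    apply mul_ne_zero
    · rw [choose_p_sub_one (s % p) (Nat.mod_lt _ (by omega))]
      apply pow_ne_zero
      simp only [ne_eq, neg_eq_zero]
      exact one_ne_zero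
    · apply ih
      rw [Nat.div_lt_iff_lt_mul (by omega)]
      calc s < p ^ (L + 1) := hs
        _ = p ^ L * p := _root_.pow_succ p L

lemma lucas_eval (L A B r s : ℕ) (hr : r < p ^ L) (hs : s < p ^ L) :
    (((A * p ^ L + r).choose (B * p ^ L + s) : ℕ) : ZMod p)
      = ((A.choose B : ℕ) : ZMod p) * ((r.choose s : ℕ) : ZMod p) := by
  have hq : 0 < p ^ L := pow_pos (Fact.out : p.Prime).pos _
  have hdiv1 : (A * p ^ L + r) / p ^ L = A := by
    rw [Nat.add_comm, Nat.add_mul_div_right _ _ hq, Nat.div_eq_of_lt hr]; omega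
  have hmod1 : (A * p ^ L + r) % p ^ L = r := by
    rw [Nat.add_comm, Nat.add_mul_mod_self_right, Nat.mod_eq_of_lt hr]
  have hdiv2 : (B * p ^ L + s) / p ^ L = B := by
    rw [Nat.add_comm, Nat.add_mul_div_right _ _ hq, Nat.div_eq_of_lt hs]; omega
  have hmod2 : (B * p ^ L + s) % p ^ L = s := by
    rw [Nat.add_comm, Nat.add_mul_mod_self_right, Nat.mod_eq_of_lt hs]
  rw [lucas_pow L, hdiv1, hmod1, hdiv2, hmod2]

end NT

lemma count_between {N : ℕ} (Y X : Finset (Fin N)) (hYX : Y ⊆ X) (s : ℕ) (hs : Y.card ≤ s) :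
    (univ.filter fun Z : Finset (Fin N) => Z.card = s ∧ Y ⊆ Z ∧ Z ⊆ X).card
      = (X.card - Y.card).choose (s - Y.card) := by
  rw [← Finset.card_sdiff_of_subset hYX, ← Finset.card_powersetCard (s - Y.card) (X \ Y)]
  apply Finset.card_nbij' (fun Z => Z \ Y) (fun W => Y ∪ W)
  · intro Z hZ
    simp only [Finset.mem_coe, mem_filter, mem_univ, true_and] at hZ
    obtain ⟨hZc, hYZ, hZX⟩ := hZ
    rw [Finset.mem_coe, Finset.mem_powersetCard]
    refine ⟨Finset.sdiff_subset_sdiff hZX (Finset.Subset.refl Y), ?_⟩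
    rw [Finset.card_sdiff_of_subset hYZ, hZc]
  · intro W hW
    rw [Finset.mem_coe, Finset.mem_powersetCard] at hW
    obtain ⟨hWX, hWc⟩ := hW
    have hdisj : Disjoint Y W := disjoint_sdiff_self_right.mono_right hWX
    simp only [Finset.mem_coe, mem_filter, mem_univ, true_and]
    refine ⟨?_, Finset.subset_union_left, ?_⟩
    · rw [Finset.card_union_of_disjoint hdisj, hWc]
      omega
    · exact Finset.union_subset hYX (hWX.trans (Finset.sdiff_subset))
  · intro Z hZ
    simp only [Finset.mem_coe, mem_filter, mem_univ, true_and] at hZ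
    exact Finset.union_sdiff_of_subset hZ.2.1
  · intro W hW
    rw [Finset.mem_coe, Finset.mem_powersetCard] at hW
    have hdisj : Disjoint Y W := disjoint_sdiff_self_right.mono_right hW.1
    exact Finset.union_sdiff_cancel_left hdisj

lemma count_supersets {N : ℕ} (Y : Finset (Fin N)) (s : ℕ) (hs : Y.card ≤ s) :
    (univ.filter fun Z : Finset (Fin N) => Z.card = s ∧ Y ⊆ Z).card
      = (N - Y.card).choose (s - Y.card) := by
  have h := count_between Y univ (Finset.subset_univ Y) s hs
  rw [Finset.card_univ, Fintype.card_fin] at h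
  rw [← h]
  congr 1
  apply Finset.filter_congr
  intro Z _
  simp [Finset.subset_univ]

lemma design_rel (k : Type*) [Field k] (a b : ℕ) (hb : 1 ≤ b) (hab : b ≤ a)
    (u : Finset (Fin (a + b)) → k) (μ : ℕ → k)
    (hu : ∀ t < b, ∀ Y : Finset (Fin (a + b)), Y.card = t →
        ∑ X ∈ univ.filter (fun X : Finset (Fin (a + b)) => X.card = b ∧ Y ⊆ X), u X = μ t)
    (t j : ℕ) (hj : 1 ≤ j) (htj : t + j < b) :
    ((b - t).choose j : k) * μ t = ((a + b - t).choose j : k) * μ (t + j) := by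
  have hjj : t + j - t = j := by omega
  obtain ⟨Y, hYu, hYcard⟩ : ∃ Y ⊆ (univ : Finset (Fin (a + b))), Y.card = t := by
    apply Finset.exists_subset_card_eq
    rw [Finset.card_univ, Fintype.card_fin]
    omega
  have hS :
      (∑ Z ∈ univ.filter (fun Z : Finset (Fin (a + b)) => Z.card = t + j ∧ Y ⊆ Z),
        ∑ X ∈ univ.filter (fun X : Finset (Fin (a + b)) => X.card = b ∧ Z ⊆ X), u X)
      = ∑ Z ∈ univ, ∑ X ∈ univ,
          (if (Z.card = t + j ∧ Y ⊆ Z) ∧ (X.card = b ∧ Z ⊆ X) then u X else 0) := by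
    rw [Finset.sum_filter]
    refine Finset.sum_congr rfl fun Z _ => ?_
    by_cases hP : Z.card = t + j ∧ Y ⊆ Z
    · rw [if_pos hP, Finset.sum_filter]
      refine Finset.sum_congr rfl fun X _ => ?_
      exact if_congr (by tauto) rfl rfl
    · rw [if_neg hP]
      symm
      apply Finset.sum_eq_zero
      intro X _
      rw [if_neg]
      tauto
  have hRHS :
      (∑ Z ∈ univ.filter (fun Z : Finset (Fin (a + b)) => Z.card = t + j ∧ Y ⊆ Z),
        ∑ X ∈ univ.filter (fun X : Finset (Fin (a + b)) => X.card = b ∧ Z ⊆ X), u X)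
      = ((a + b - t).choose j : k) * μ (t + j) := by
    have hinner : ∀ Z ∈ univ.filter
        (fun Z : Finset (Fin (a + b)) => Z.card = t + j ∧ Y ⊆ Z),
        (∑ X ∈ univ.filter (fun X : Finset (Fin (a + b)) => X.card = b ∧ Z ⊆ X), u X)
          = μ (t + j) := by
      intro Z hZ
      rw [Finset.mem_filter] at hZ
      exact hu (t + j) htj Z hZ.2.1
    rw [Finset.sum_congr rfl hinner, Finset.sum_const, count_supersets Y (t + j) (by omega),
      hYcard, hjj, nsmul_eq_mul]
  have hLHS :
      (∑ Z ∈ univ, ∑ X ∈ univ,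
          (if (Z.card = t + j ∧ Y ⊆ Z) ∧ (X.card = b ∧ Z ⊆ X) then u X else 0))
      = ((b - t).choose j : k) * μ t := by
    rw [Finset.sum_comm]
    have hcond : ∀ Z X : Finset (Fin (a + b)),
        ((Z.card = t + j ∧ Y ⊆ Z) ∧ (X.card = b ∧ Z ⊆ X))
          ↔ ((X.card = b ∧ Y ⊆ X) ∧ (Z.card = t + j ∧ Y ⊆ Z ∧ Z ⊆ X)) := by
      intro Z X
      constructor
      · rintro ⟨⟨h1, h2⟩, h3, h4⟩
        exact ⟨⟨h3, h2.trans h4⟩, h1, h2, h4⟩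
      · rintro ⟨⟨h3, _⟩, h1, h2, h4⟩
        exact ⟨⟨h1, h2⟩, h3, h4⟩
    have hstep : (∑ X ∈ univ, ∑ Z ∈ univ,
          (if (Z.card = t + j ∧ Y ⊆ Z) ∧ (X.card = b ∧ Z ⊆ X) then u X else 0))
        = ∑ X ∈ univ.filter (fun X : Finset (Fin (a + b)) => X.card = b ∧ Y ⊆ X),
            ∑ Z ∈ univ.filter
              (fun Z : Finset (Fin (a + b)) => Z.card = t + j ∧ Y ⊆ Z ∧ Z ⊆ X), u X := by
      rw [Finset.sum_filter]
      refine Finset.sum_congr rfl fun X _ => ?_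
      by_cases hP : X.card = b ∧ Y ⊆ X
      · rw [if_pos hP, Finset.sum_filter]
        refine Finset.sum_congr rfl fun Z _ => ?_
        by_cases hQ : Z.card = t + j ∧ Y ⊆ Z ∧ Z ⊆ X
        · rw [if_pos ((hcond Z X).mpr ⟨hP, hQ⟩), if_pos hQ]
        · rw [if_neg (fun hc => hQ ((hcond Z X).mp hc).2), if_neg hQ]
      · rw [if_neg hP]
        apply Finset.sum_eq_zero
        intro Z _
        rw [if_neg]
        exact fun hc => hP ((hcond Z X).mp hc).1
    rw [hstep]
    have hinner2 : ∀ X ∈ univ.filter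
        (fun X : Finset (Fin (a + b)) => X.card = b ∧ Y ⊆ X),
        (∑ Z ∈ univ.filter
            (fun Z : Finset (Fin (a + b)) => Z.card = t + j ∧ Y ⊆ Z ∧ Z ⊆ X), u X)
          = ((b - t).choose j : k) * u X := by
      intro X hX
      rw [Finset.mem_filter] at hX
      rw [Finset.sum_const, count_between Y X hX.2.2 (t + j) (by omega), hYcard, hX.2.1,
        hjj, nsmul_eq_mul]
    rw [Finset.sum_congr rfl hinner2, ← Finset.mul_sum, hu t (by omega) Y hYcard]
  rw [← hLHS, ← hS, hRHS]

/-- Let `k` be a field of characteristic `p` and `a ≥ b ≥ 1` with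
`(a,b)` James (`p^{l_p(b)} ∣ a + 1`).  Any two non-null universal `p`-ary designs `u`,
`v` for `(a,b)`, with coefficient sequences `μ` and `μ'`, are similar: there is `α ∈ k`
with `μ_j = α · μ'_j` for all `j < b`. -/
theorem james_designs_similar (p : ℕ) (hp : p.Prime)
    (k : Type*) [Field k] [CharP k p]
    (a b : ℕ) (hb : 1 ≤ b) (hab : b ≤ a)
    (hJames : p ^ Nat.log p b ∣ a + 1)
    (u v : Finset (Fin (a + b)) → k) (μ μ' : ℕ → k)
    (hu : ∀ t < b, ∀ Y : Finset (Fin (a + b)), Y.card = t →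
        ∑ X ∈ univ.filter (fun X : Finset (Fin (a + b)) => X.card = b ∧ Y ⊆ X), u X = μ t)
    (hv : ∀ t < b, ∀ Y : Finset (Fin (a + b)), Y.card = t →
        ∑ X ∈ univ.filter (fun X : Finset (Fin (a + b)) => X.card = b ∧ Y ⊆ X), v X = μ' t)
    (hunn : ∃ t < b, μ t ≠ 0) (hvnn : ∃ t < b, μ' t ≠ 0) :
    ∃ α : k, ∀ j < b, μ j = α * μ' j := by
  haveI : Fact p.Prime := ⟨hp⟩
  set L := Nat.log p b with hL
  have hppos : 0 < p := hp.pos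
  have hq1 : 1 ≤ p ^ L := Nat.one_le_pow _ _ hppos
  have hqb : p ^ L ≤ b := Nat.pow_log_le_self p (by omega)
  have hbq : b < p ^ L * p := by
    have h := Nat.lt_pow_succ_log_self hp.one_lt b
    rwa [_root_.pow_succ] at h
  obtain ⟨c, hc⟩ := hJames
  have hc' : a + 1 = c * p ^ L := by rw [hc]; ring
  have hc1 : 1 ≤ c := by
    rcases Nat.eq_zero_or_pos c with h | h
    · rw [h] at hc'; omega
    · exact h
  -- cast helper
  set f : ZMod p →+* k := ZMod.castHom dvd_rfl k with hf
  have hcast : ∀ n : ℕ, (n : k) = f (n : ZMod p) := fun n => (map_natCast f n).symm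
  have hinj : Function.Injective f := f.injective
  have coefk : ∀ A B r s : ℕ, r < p ^ L → s < p ^ L →
      (((A * p ^ L + r).choose (B * p ^ L + s) : ℕ) : k)
        = ((A.choose B : ℕ) : k) * ((r.choose s : ℕ) : k) := by
    intro A B r s hr hs
    rw [hcast, hcast, hcast, lucas_eval L A B r s hr hs, map_mul]
  have nonzk : ∀ s : ℕ, s < p ^ L → (((p ^ L - 1).choose s : ℕ) : k) ≠ 0 := by
    intro s hs h0
    apply choose_pow_sub_one_ne_zero (p := p) L s hs
    apply hinj
    rw [map_zero, ← hcast]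
    exact h0
  -- the relation satisfied by both coefficient sequences
  have hrelu : ∀ t j, 1 ≤ j → t + j < b →
      ((b - t).choose j : k) * μ t = ((a + b - t).choose j : k) * μ (t + j) :=
    fun t j hj htj => design_rel k a b hb hab u μ hu t j hj htj
  have hrelv : ∀ t j, 1 ≤ j → t + j < b →
      ((b - t).choose j : k) * μ' t = ((a + b - t).choose j : k) * μ' (t + j) :=
    fun t j hj htj => design_rel k a b hb hab v μ' hv t j hj htj
  -- vanishing off the chain
  have vanish : ∀ t, t < b → ¬ (p ^ L ∣ (b - t)) → ∀ w : ℕ → k,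
      (∀ t j, 1 ≤ j → t + j < b →
        ((b - t).choose j : k) * w t = ((a + b - t).choose j : k) * w (t + j)) →
      w t = 0 := by
    intro t ht hndvd w hw
    have hn1 : 1 ≤ b - t := by omega
    obtain ⟨m, r, hnmr, hrq⟩ : ∃ m r, b - t = m * p ^ L + r ∧ r < p ^ L :=
      ⟨(b - t) / p ^ L, (b - t) % p ^ L, (Nat.div_add_mod' (b - t) (p ^ L)).symm,
        Nat.mod_lt _ (by omega)⟩
    have hr1 : 1 ≤ r := by
      rcases Nat.eq_zero_or_pos r with h0 | h0
      · exact absurd ⟨m, by rw [hnmr, h0, add_zero, mul_comm]⟩ hndvd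
      · exact h0
    by_cases hm : 1 ≤ m
    · have hmq : p ^ L ≤ m * p ^ L := Nat.le_mul_of_pos_left _ hm
      have htr : t + r < b := by omega
      have h1 := hw t r hr1 htr
      have e1 : ((b - t).choose r : k) = 1 := by
        have h2 := coefk m 0 r r hrq hrq
        simp only [zero_mul, zero_add, Nat.choose_zero_right, Nat.choose_self,
          Nat.cast_one, one_mul, mul_one] at h2
        rw [hnmr]
        exact h2
      have e2 : ((a + b - t).choose r : k) = 0 := by
        have hcm : (c + m) * p ^ L = c * p ^ L + m * p ^ L := by ring
        have habt : a + b - t = (c + m) * p ^ L + (r - 1) := by omega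
        have h2 := coefk (c + m) 0 (r - 1) r (by omega) hrq
        rw [Nat.choose_eq_zero_of_lt (show r - 1 < r by omega)] at h2
        simp only [zero_mul, zero_add, Nat.cast_zero, mul_zero] at h2
        rw [habt]
        exact h2
      rw [e1, e2, one_mul, zero_mul] at h1
      exact h1
    · have hm0 : m = 0 := by omega
      rw [hm0, zero_mul, zero_add] at hnmr
      have hnq : b - t < p ^ L := by omega
      have h1 := hw (b - p ^ L) (p ^ L - (b - t)) (by omega) (by omega)
      have hi1 : b - (b - p ^ L) = p ^ L := by omega
      have hi2 : (b - p ^ L) + (p ^ L - (b - t)) = t := by omega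
      have hi3 : a + b - (b - p ^ L) = a + p ^ L := by omega
      rw [hi1, hi2, hi3] at h1
      have e1 : ((p ^ L).choose (p ^ L - (b - t)) : k) = 0 := by
        have h2 := coefk 1 0 0 (p ^ L - (b - t)) (by omega) (by omega)
        rw [Nat.choose_eq_zero_of_lt (show (0 : ℕ) < p ^ L - (b - t) by omega)] at h2
        simp only [one_mul, zero_mul, zero_add, add_zero, Nat.cast_zero, mul_zero] at h2
        exact h2
      have e2 : ((a + p ^ L).choose (p ^ L - (b - t)) : k) ≠ 0 := by
        have habq : a + p ^ L = c * p ^ L + (p ^ L - 1) := by omega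
        have h2 := coefk c 0 (p ^ L - 1) (p ^ L - (b - t)) (by omega) (by omega)
        simp only [zero_mul, zero_add, Nat.choose_zero_right, Nat.cast_one, one_mul] at h2
        rw [habq, h2]
        exact nonzk (p ^ L - (b - t)) (by omega)
      rw [e1, zero_mul] at h1
      exact (mul_eq_zero.mp h1.symm).resolve_left e2
  -- the chain along multiples of p ^ L
  have chain : ∀ m : ℕ, 1 ≤ m → m * p ^ L ≤ b → ∃ e : k, ∀ w : ℕ → k,
      (∀ t j, 1 ≤ j → t + j < b →
        ((b - t).choose j : k) * w t = ((a + b - t).choose j : k) * w (t + j)) →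
      w (b - m * p ^ L) = e * w (b - p ^ L) := by
    refine Nat.le_induction ?_ ?_
    · intro _
      exact ⟨1, fun w _ => by rw [one_mul, one_mul]⟩
    · intro m hm ih hmb
      have hmono : m * p ^ L ≤ (m + 1) * p ^ L := Nat.mul_le_mul_right _ (by omega)
      have hsplit : (m + 1) * p ^ L = m * p ^ L + p ^ L := by ring
      have hmq : p ^ L ≤ m * p ^ L := Nat.le_mul_of_pos_left _ hm
      obtain ⟨e, he⟩ := ih (le_trans hmono hmb)
      refine ⟨((c + m : ℕ) : k) * (((m + 1 : ℕ) : k))⁻¹ * e, ?_⟩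
      intro w hw
      have h1 := hw (b - (m + 1) * p ^ L) (p ^ L) (by omega) (by omega)
      have hi1 : b - (m + 1) * p ^ L + p ^ L = b - m * p ^ L := by omega
      have hi2 : b - (b - (m + 1) * p ^ L) = (m + 1) * p ^ L := by omega
      have hi3 : a + b - (b - (m + 1) * p ^ L) = a + (m + 1) * p ^ L := by omega
      rw [hi1, hi2, hi3] at h1
      have e1 : (((m + 1) * p ^ L).choose (p ^ L) : k) = ((m + 1 : ℕ) : k) := by
        have h2 := coefk (m + 1) 1 0 0 (by omega) (by omega)
        simp only [add_zero, one_mul, Nat.choose_one_right, Nat.choose_self,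
          Nat.cast_one, mul_one] at h2
        exact h2
      have e2 : ((a + (m + 1) * p ^ L).choose (p ^ L) : k) = ((c + m : ℕ) : k) := by
        have hcm : (c + m) * p ^ L = c * p ^ L + m * p ^ L := by ring
        have habq : a + (m + 1) * p ^ L = (c + m) * p ^ L + (p ^ L - 1) := by omega
        have h2 := coefk (c + m) 1 (p ^ L - 1) 0 (by omega) (by omega)
        simp only [add_zero, one_mul, Nat.choose_one_right, Nat.choose_zero_right,
          Nat.cast_one, mul_one] at h2
        rw [habq]
        exact h2
      rw [e1, e2] at h1
      have hm1lt : m + 1 < p := by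
        have := hmb
        by_contra hcon
        push_neg at hcon
        have : p * p ^ L ≤ (m + 1) * p ^ L := Nat.mul_le_mul_right _ hcon
        have h3 : p ^ L * p = p * p ^ L := by ring
        omega
      have hm1ne : ((m + 1 : ℕ) : k) ≠ 0 := by
        rw [Ne, CharP.cast_eq_zero_iff k p]
        intro hdvd
        have := Nat.le_of_dvd (by omega) hdvd
        omega
      have h2 : w (b - (m + 1) * p ^ L)
          = (((m + 1 : ℕ) : k))⁻¹ * (((c + m : ℕ) : k) * w (b - m * p ^ L)) := by
        rw [← h1, inv_mul_cancel_left₀ hm1ne]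
      rw [h2, he w hw]
      ring
  -- each coefficient is a fixed multiple of the one at b - p ^ L
  have alltE : ∀ t, t < b → ∃ e : k, ∀ w : ℕ → k,
      (∀ t j, 1 ≤ j → t + j < b →
        ((b - t).choose j : k) * w t = ((a + b - t).choose j : k) * w (t + j)) →
      w t = e * w (b - p ^ L) := by
    intro t ht
    by_cases hd : p ^ L ∣ (b - t)
    · obtain ⟨m, hm⟩ := hd
      have hm' : b - t = m * p ^ L := by rw [hm]; ring
      have hm1 : 1 ≤ m := by
        rcases Nat.eq_zero_or_pos m with h | h
        · rw [h] at hm'; omega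
        · exact h
      have hmq : p ^ L ≤ m * p ^ L := Nat.le_mul_of_pos_left _ hm1
      have hteq : t = b - m * p ^ L := by omega
      obtain ⟨e, he⟩ := chain m hm1 (by omega)
      exact ⟨e, fun w hw => by rw [hteq]; exact he w hw⟩
    · exact ⟨0, fun w hw => by rw [zero_mul]; exact vanish t ht hd w hw⟩
  choose E hE using alltE
  have hbqlt : b - p ^ L < b := by omega
  have hμ'q : μ' (b - p ^ L) ≠ 0 := by
    intro h0
    obtain ⟨t, ht, hne⟩ := hvnn
    exact hne (by rw [hE t ht μ' hrelv, h0, mul_zero])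
  refine ⟨μ (b - p ^ L) * (μ' (b - p ^ L))⁻¹, ?_⟩
  intro j hj
  rw [hE j hj μ hrelu, hE j hj μ' hrelv]
  field_simp
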